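/- If the penalty term φ is coercive on A, then for every y ∈ ℝ^d and every subgradient tuple V at y the convex function Γ(·, y, V) attains a global minimum on the set A. -/
import Mathlib


open RealInnerProductSpace Finset Filter Topology

noncomputable section

/-- Euclidean space `ℝ^d`. -/
abbrev Euc (d : ℕ) := EuclideanSpace ℝ (Fin d)

/-- The (convex-analysis) subdifferential of `f` at `y`. -/
def subdiff {d : ℕ} (f : Euc d → ℝ) (y : Euc d) : Set (Euc d) :=
  {v | ∀ x, f y + ⟪v, x - y⟫ ≤ f x}

/-- The normal cone to `A` at `x`. -/
def normalCone {d : ℕ} (A : Set (Euc d)) (x : Euc d) : Set (Euc d) :=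
  {v | ∀ y ∈ A, ⟪v, y - x⟫ ≤ 0}

/-- A subgradient tuple `V = (v₀, vᵢ (i ∈ I), vⱼ, wⱼ (j ∈ E))` at the point `y`:
`v_k ∈ ∂h_k(y)` for `k ∈ {0} ∪ I ∪ E` and `w_j ∈ ∂g_j(y)` for `j ∈ E`. -/
structure SubgradTuple {d l p : ℕ} (h0 : Euc d → ℝ) (hI : Fin l → Euc d → ℝ)
    (gE hE : Fin p → Euc d → ℝ) (y : Euc d) : Type where
  v0 : Euc d
  vI : Fin l → Euc d
  vE : Fin p → Euc d
  wE : Fin p → Euc d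
  v0_mem : v0 ∈ subdiff h0 y
  vI_mem : ∀ i, vI i ∈ subdiff (hI i) y
  vE_mem : ∀ j, vE j ∈ subdiff (hE j) y
  wE_mem : ∀ j, wE j ∈ subdiff (gE j) y

variable {d l p : ℕ}

/-- The linearised infeasibility measure `Γ(x, y, V)`. -/
def Gam (gI : Fin l → Euc d → ℝ) {h0 : Euc d → ℝ} {hI : Fin l → Euc d → ℝ}
    {gE hE : Fin p → Euc d → ℝ} {y : Euc d}
    (V : SubgradTuple h0 hI gE hE y) (x : Euc d) : ℝ :=
  (∑ i, max (gI i x - hI i y - ⟪V.vI i, x - y⟫) 0)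
  + ∑ j, max (gE j x - hE j y - ⟪V.vE j, x - y⟫)
      (hE j x - gE j y - ⟪V.wE j, x - y⟫)

/-- The convex majorant `Q_c(x, y, V)` of the penalty function. -/
def Qfun (g0 : Euc d → ℝ) (gI : Fin l → Euc d → ℝ) {h0 : Euc d → ℝ}
    {hI : Fin l → Euc d → ℝ} {gE hE : Fin p → Euc d → ℝ} {y : Euc d}
    (V : SubgradTuple h0 hI gE hE y) (c : ℝ) (x : Euc d) : ℝ :=
  g0 x - ⟪V.v0, x - y⟫ + c * Gam gI V x

/-- The ℓ1 penalty term `φ`. -/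
def phi (gI hI : Fin l → Euc d → ℝ) (gE hE : Fin p → Euc d → ℝ) (x : Euc d) : ℝ :=
  (∑ i, max (gI i x - hI i x) 0) + ∑ j, |gE j x - hE j x|

/-- The ℓ1 penalty function `Φ_c = f₀ + c φ`. -/
def Phi (g0 h0 : Euc d → ℝ) (gI hI : Fin l → Euc d → ℝ) (gE hE : Fin p → Euc d → ℝ)
    (c : ℝ) (x : Euc d) : ℝ :=
  (g0 x - h0 x) + c * phi gI hI gE hE x

/-- Feasibility for the problem (P). -/
def Feasible (A : Set (Euc d)) (gI hI : Fin l → Euc d → ℝ)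
    (gE hE : Fin p → Euc d → ℝ) (x : Euc d) : Prop :=
  x ∈ A ∧ (∀ i, gI i x - hI i x ≤ 0) ∧ (∀ j, gE j x - hE j x = 0)

/-- Criticality for the problem (P) (Definition 1). -/
def IsCritical (A : Set (Euc d)) (g0 h0 : Euc d → ℝ) (gI hI : Fin l → Euc d → ℝ)
    (gE hE : Fin p → Euc d → ℝ) (x : Euc d) : Prop :=
  ∃ V : SubgradTuple h0 hI gE hE x, ∃ lam : Fin l → ℝ, ∃ mu1 mu2 : Fin p → ℝ,
    (∀ i, 0 ≤ lam i) ∧ (∀ j, 0 ≤ mu1 j) ∧ (∀ j, 0 ≤ mu2 j) ∧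
    (∀ i, lam i * (gI i x - hI i x) = 0) ∧
    ∃ u0 ∈ subdiff g0 x, ∃ uI : Fin l → Euc d, (∀ i, uI i ∈ subdiff (gI i) x) ∧
    ∃ uE : Fin p → Euc d, (∀ j, uE j ∈ subdiff (gE j) x) ∧
    ∃ zE : Fin p → Euc d, (∀ j, zE j ∈ subdiff (hE j) x) ∧
    ∃ ν ∈ normalCone A x,
      (0 : Euc d) = (u0 - V.v0) + (∑ i, lam i • (uI i - V.vI i))
        + (∑ j, mu1 j • (uE j - V.vE j)) - (∑ j, mu2 j • (V.wE j - zE j)) + ν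

/-- Generalised criticality for the penalty parameter `c`. -/
def IsGenCritical (A : Set (Euc d)) (g0 h0 : Euc d → ℝ) (gI hI : Fin l → Euc d → ℝ)
    (gE hE : Fin p → Euc d → ℝ) (c : ℝ) (x : Euc d) : Prop :=
  x ∈ A ∧ ∃ V : SubgradTuple h0 hI gE hE x, ∀ z ∈ A, Qfun g0 gI V c x ≤ Qfun g0 gI V c z

/-- Criticality for the penalty term `φ`. -/
def IsCriticalPen (A : Set (Euc d)) (h0 : Euc d → ℝ) (gI hI : Fin l → Euc d → ℝ)
    (gE hE : Fin p → Euc d → ℝ) (x : Euc d) : Prop :=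
  x ∈ A ∧ ∃ V : SubgradTuple h0 hI gE hE x, ∀ z ∈ A, Gam gI V x ≤ Gam gI V z

/-- `F` is coercive on `A`. -/
def CoerciveOn {d : ℕ} (F : Euc d → ℝ) (A : Set (Euc d)) : Prop :=
  ∀ u : ℕ → Euc d, (∀ n, u n ∈ A) → Tendsto (fun n => ‖u n‖) atTop atTop →
    Tendsto (fun n => F (u n)) atTop atTop

theorem stmt3 {d l p : ℕ} (A : Set (Euc d)) (g0 h0 : Euc d → ℝ)
    (gI hI : Fin l → Euc d → ℝ) (gE hE : Fin p → Euc d → ℝ)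
    (hA : Convex ℝ A) (hAcl : IsClosed A) (hAne : A.Nonempty)
    (hg0 : ConvexOn ℝ Set.univ g0) (hh0 : ConvexOn ℝ Set.univ h0)
    (hgI : ∀ i, ConvexOn ℝ Set.univ (gI i)) (hhI : ∀ i, ConvexOn ℝ Set.univ (hI i))
    (hgE : ∀ j, ConvexOn ℝ Set.univ (gE j)) (hhE : ∀ j, ConvexOn ℝ Set.univ (hE j))
    (hcoer : CoerciveOn (phi gI hI gE hE) A)
    (y : Euc d) (V : SubgradTuple h0 hI gE hE y) :
    ∃ xs ∈ A, ∀ z ∈ A, Gam gI V xs ≤ Gam gI V z := by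

  classical
  set G : Euc d → ℝ := Gam gI V with hG
  -- continuity of G
  have hcont : Continuous G := by
    have hc : ∀ (f : Euc d → ℝ), ConvexOn ℝ Set.univ f → Continuous f := fun f hf => by
      exact continuousOn_univ.mp (hf.continuousOn isOpen_univ)
    have hinner : ∀ v : Euc d, Continuous fun x : Euc d => ⟪v, x - y⟫ :=
      fun v => Continuous.inner continuous_const (continuous_id.sub continuous_const)
    apply Continuous.add
    · exact continuous_finset_sum _ fun i _ =>
        ((((hc _ (hgI i)).sub continuous_const).sub (hinner _)).max continuous_const)
    · exact continuous_finset_sum _ fun j _ =>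
        ((((hc _ (hgE j)).sub continuous_const).sub (hinner _)).max
          (((hc _ (hhE j)).sub continuous_const).sub (hinner _)))
  -- G dominates phi
  have hdom : ∀ x, phi gI hI gE hE x ≤ G x := by
    intro x
    unfold G
    unfold Gam phi
    apply add_le_add
    · refine Finset.sum_le_sum fun i _ => max_le_max ?_ le_rfl
      have := V.vI_mem i x
      linarith
    · refine Finset.sum_le_sum fun j _ => ?_
      have h1 := V.vE_mem j x
      have h2 := V.wE_mem j x
      rw [abs_sub_le_iff]
      constructor
      · exact le_max_of_le_left (by linarith)
      · exact le_max_of_le_right (by linarith)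
  obtain ⟨a, ha⟩ := hAne
  set S : Set (Euc d) := {x ∈ A | G x ≤ G a} with hS
  have hScl : IsClosed S := hAcl.inter (isClosed_le hcont continuous_const)
  have hSbdd : Bornology.IsBounded S := by
    by_contra hb
    rw [isBounded_iff_forall_norm_le] at hb
    push_neg at hb
    choose u hu hun using fun n : ℕ => hb n
    have hnorm : Tendsto (fun n => ‖u n‖) atTop atTop :=
      tendsto_atTop_mono (fun n => (hun n).le) tendsto_natCast_atTop_atTop
    have hφ := hcoer u (fun n => (hu n).1) hnorm
    have hub : ∀ n, phi gI hI gE hE (u n) ≤ G a := fun n => (hdom (u n)).trans (hu n).2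
    obtain ⟨n, hn⟩ := (hφ.eventually_gt_atTop (G a)).exists
    exact absurd (hub n) (not_le.mpr hn)
  have hScp : IsCompact S := Metric.isCompact_of_isClosed_isBounded hScl hSbdd
  have haS : a ∈ S := ⟨ha, le_rfl⟩
  obtain ⟨xs, hxsS, hmin⟩ := hScp.exists_isMinOn ⟨a, haS⟩ hcont.continuousOn
  refine ⟨xs, hxsS.1, fun z hz => ?_⟩
  by_cases hcase : G z ≤ G a
  · exact hmin ⟨hz, hcase⟩
  · exact (hmin haS).trans (le_of_not_ge hcase)
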